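/- arXiv:2404.09279 — 2 statements merged into one kernel-verified Lean document; each statement's English description precedes it below -/
import Mathlib

section
/- Assume every V_k is normal and the matrices V_1, …, V_r pairwise commute. Then μ(0) = (1/4)·∑_{k=1}^r (2·tr(V_k* V_k) − |tr V_k|²); equivalently, μ(0) = (1/4)·∑_{k=1}^r |λ₁(V_k) − λ₂(V_k)|², where λ₁(V_k), λ₂(V_k) are the two eigenvalues of V_k. -/
open Matrix Complex

/-- `Jf V U i j = ∑ₖ |(U* Vₖ U)ᵢⱼ|²`. -/
noncomputable def Jf {r : ℕ} (V : Fin r → Matrix (Fin 2) (Fin 2) ℂ)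
    (U : Matrix (Fin 2) (Fin 2) ℂ) (i j : Fin 2) : ℝ :=
  ∑ k, ‖(Uᴴ * V k * U) i j‖ ^ 2

/-- The space of generators `Q`. -/
noncomputable def Qset {r : ℕ} (V : Fin r → Matrix (Fin 2) (Fin 2) ℂ) : Set (ℝ × ℝ) :=
  {p | ∃ U ∈ Matrix.specialUnitaryGroup (Fin 2) ℂ,
    p = (Jf V U 0 1 - Jf V U 1 0, Jf V U 0 1 + Jf V U 1 0)}

/-- `lam` is stabilizable if some unitary makes the induced derivative vanish. -/
def Stabilizable {r : ℕ} (V : Fin r → Matrix (Fin 2) (Fin 2) ℂ) (lam : ℝ) : Prop :=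
  ∃ U ∈ Matrix.specialUnitaryGroup (Fin 2) ℂ,
    Jf V U 0 1 - lam * (Jf V U 0 1 + Jf V U 1 0) = 0

section Aux

lemma normSq_offdiag (A : Matrix (Fin 2) (Fin 2) ℂ) (h : A * Aᴴ = Aᴴ * A) :
    Complex.normSq (A 0 1) = Complex.normSq (A 1 0) := by
  have h00 := congrFun (congrFun h 0) 0
  simp only [Matrix.mul_apply, Fin.sum_univ_two, Matrix.conjTranspose_apply,
    Complex.star_def] at h00
  have : (Complex.normSq (A 0 1) : ℂ) = (Complex.normSq (A 1 0) : ℂ) := by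
    rw [Complex.normSq_eq_conj_mul_self, Complex.normSq_eq_conj_mul_self]
    linear_combination h00
  exact_mod_cast this

lemma trace_re_eq (A : Matrix (Fin 2) (Fin 2) ℂ) :
    (Aᴴ * A).trace.re =
      Complex.normSq (A 0 0) + Complex.normSq (A 1 0) +
      Complex.normSq (A 0 1) + Complex.normSq (A 1 1) := by
  simp only [Matrix.trace_fin_two, Matrix.mul_apply, Fin.sum_univ_two,
    Matrix.conjTranspose_apply, Complex.star_def]
  simp only [Complex.add_re, Complex.conj_mul', ← Complex.ofReal_pow, Complex.ofReal_re,
    Complex.normSq_eq_norm_sq]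
  ring

lemma trace_identity (A : Matrix (Fin 2) (Fin 2) ℂ) (h : A * Aᴴ = Aᴴ * A) :
    2 * (Aᴴ * A).trace.re - ‖A.trace‖ ^ 2 =
      Complex.normSq (A 0 0 - A 1 1) + 4 * Complex.normSq (A 0 1) := by
  have hs := normSq_offdiag A h
  rw [trace_re_eq, Matrix.trace_fin_two, Complex.sq_norm]
  simp only [Complex.normSq_apply, Complex.add_re, Complex.add_im, Complex.sub_re,
    Complex.sub_im] at hs ⊢
  linarith [hs]

lemma cancel_mid {U : Matrix (Fin 2) (Fin 2) ℂ} (hU2 : U * Uᴴ = 1)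
    (X : Matrix (Fin 2) (Fin 2) ℂ) : U * (Uᴴ * X) = X := by
  rw [← Matrix.mul_assoc, hU2, Matrix.one_mul]

lemma conj_normal {U : Matrix (Fin 2) (Fin 2) ℂ} (hU2 : U * Uᴴ = 1)
    (A : Matrix (Fin 2) (Fin 2) ℂ) (hA : A * Aᴴ = Aᴴ * A) :
    (Uᴴ * A * U) * (Uᴴ * A * U)ᴴ = (Uᴴ * A * U)ᴴ * (Uᴴ * A * U) := by
  simp only [Matrix.conjTranspose_mul, Matrix.conjTranspose_conjTranspose, Matrix.mul_assoc,
    cancel_mid hU2]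
  rw [← Matrix.mul_assoc A, hA, Matrix.mul_assoc]

lemma conj_trace {U : Matrix (Fin 2) (Fin 2) ℂ} (hU2 : U * Uᴴ = 1)
    (A : Matrix (Fin 2) (Fin 2) ℂ) : (Uᴴ * A * U).trace = A.trace := by
  rw [Matrix.trace_mul_cycle, hU2, Matrix.one_mul]

lemma conj_sq {U : Matrix (Fin 2) (Fin 2) ℂ} (hU2 : U * Uᴴ = 1)
    (A : Matrix (Fin 2) (Fin 2) ℂ) :
    (Uᴴ * A * U)ᴴ * (Uᴴ * A * U) = Uᴴ * (Aᴴ * A) * U := by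
  simp only [Matrix.conjTranspose_mul, Matrix.conjTranspose_conjTranspose, Matrix.mul_assoc,
    cancel_mid hU2]

lemma conj_trace_sq {U : Matrix (Fin 2) (Fin 2) ℂ} (hU2 : U * Uᴴ = 1)
    (A : Matrix (Fin 2) (Fin 2) ℂ) :
    ((Uᴴ * A * U)ᴴ * (Uᴴ * A * U)).trace = (Aᴴ * A).trace := by
  rw [conj_sq hU2, conj_trace hU2]

lemma exists_eigen (M : Matrix (Fin 2) (Fin 2) ℂ) :
    ∃ (μ : ℂ) (v : Fin 2 → ℂ), v ≠ 0 ∧ M.mulVec v = μ • v := by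
  obtain ⟨s, hs⟩ := IsAlgClosed.exists_pow_nat_eq ((M 0 0 + M 1 1) ^ 2 -
    4 * (M 0 0 * M 1 1 - M 0 1 * M 1 0)) (n := 2) (by norm_num)
  set μ := (M 0 0 + M 1 1 + s) / 2 with hμ
  have hdet : (M - μ • 1).det = 0 := by
    rw [Matrix.det_fin_two]
    simp only [Matrix.sub_apply, Matrix.smul_apply, Matrix.one_apply_eq,
      Matrix.one_apply_ne (by decide : (0:Fin 2) ≠ 1), Matrix.one_apply_ne (by decide : (1:Fin 2) ≠ 0)]
    simp only [smul_eq_mul, mul_one, mul_zero, sub_zero, hμ]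
    linear_combination hs / 4
  obtain ⟨v, hv0, hv⟩ := (Matrix.exists_mulVec_eq_zero_iff).mpr hdet
  refine ⟨μ, v, hv0, ?_⟩
  have := hv
  rw [Matrix.sub_mulVec, Matrix.smul_mulVec, Matrix.one_mulVec, sub_eq_zero] at this
  exact this

lemma su2_unitary (a b : ℂ) (h1 : (starRingEnd ℂ) a * a + (starRingEnd ℂ) b * b = 1) :
    (!![a, -(starRingEnd ℂ) b; b, (starRingEnd ℂ) a])ᴴ *
      !![a, -(starRingEnd ℂ) b; b, (starRingEnd ℂ) a] = 1 := by
  ext i j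
  fin_cases i <;> fin_cases j <;>
    · simp only [Matrix.mul_apply, Fin.sum_univ_two, Matrix.conjTranspose_apply,
        Matrix.cons_val', Matrix.cons_val_zero, Matrix.cons_val_one, Matrix.head_cons,
        Matrix.empty_val', Matrix.cons_val_fin_one, Matrix.head_fin_const,
        Complex.star_def, map_neg, Complex.conj_conj, Matrix.one_apply, Fin.isValue]
      norm_num
      try linear_combination h1
      try ring_nf
      try linear_combination h1

lemma su2_mem (a b : ℂ) (h1 : (starRingEnd ℂ) a * a + (starRingEnd ℂ) b * b = 1) :
    !![a, -(starRingEnd ℂ) b; b, (starRingEnd ℂ) a] ∈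
      Matrix.specialUnitaryGroup (Fin 2) ℂ := by
  rw [Matrix.mem_specialUnitaryGroup_iff]
  refine ⟨?_, ?_⟩
  · rw [Matrix.mem_unitaryGroup_iff', Matrix.star_eq_conjTranspose]
    exact su2_unitary a b h1
  · rw [Matrix.det_fin_two_of]
    linear_combination h1

lemma unitary_of_mem {U : Matrix (Fin 2) (Fin 2) ℂ}
    (hU : U ∈ Matrix.specialUnitaryGroup (Fin 2) ℂ) : Uᴴ * U = 1 ∧ U * Uᴴ = 1 := by
  have h := (Matrix.mem_specialUnitaryGroup_iff.mp hU).1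
  rw [Matrix.mem_unitaryGroup_iff', Matrix.star_eq_conjTranspose] at h
  exact ⟨h, mul_eq_one_comm.mp h⟩

lemma diag_single (M : Matrix (Fin 2) (Fin 2) ℂ) (hM : M * Mᴴ = Mᴴ * M) :
    ∃ U ∈ Matrix.specialUnitaryGroup (Fin 2) ℂ,
      (Uᴴ * M * U) 0 1 = 0 ∧ (Uᴴ * M * U) 1 0 = 0 := by
  obtain ⟨μ, v, hv0, hv⟩ := exists_eigen M
  have hnnpos : 0 < Complex.normSq (v 0) + Complex.normSq (v 1) := by
    rcases (Function.ne_iff).mp hv0 with ⟨i, hi⟩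
    have h0 : 0 ≤ Complex.normSq (v 0) := Complex.normSq_nonneg _
    have h1 : 0 ≤ Complex.normSq (v 1) := Complex.normSq_nonneg _
    fin_cases i <;>
      · have := Complex.normSq_pos.mpr (by simpa using hi)
        positivity
  set n : ℝ := Real.sqrt (Complex.normSq (v 0) + Complex.normSq (v 1)) with hn
  have hnpos : 0 < n := Real.sqrt_pos.mpr hnnpos
  have hnne : (n : ℂ) ≠ 0 := by exact_mod_cast hnpos.ne'
  have h1 : (starRingEnd ℂ) (v 0 / n) * (v 0 / n) + (starRingEnd ℂ) (v 1 / n) * (v 1 / n)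
      = 1 := by
    rw [← Complex.normSq_eq_conj_mul_self, ← Complex.normSq_eq_conj_mul_self]
    have hns : Complex.normSq ((n : ℝ) : ℂ) = Complex.normSq (v 0) + Complex.normSq (v 1) := by
      rw [Complex.normSq_ofReal]; exact Real.mul_self_sqrt hnnpos.le
    have : Complex.normSq (v 0 / n) + Complex.normSq (v 1 / n) = 1 := by
      rw [Complex.normSq_div, Complex.normSq_div, hns, ← add_div,
        div_self hnnpos.ne']
    exact_mod_cast this
  set a : ℂ := v 0 / n
  set b : ℂ := v 1 / n
  set U : Matrix (Fin 2) (Fin 2) ℂ :=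
    !![a, -(starRingEnd ℂ) b; b, (starRingEnd ℂ) a] with hUdef
  have hU1 : Uᴴ * U = 1 := su2_unitary a b h1
  have hU2 : U * Uᴴ = 1 := mul_eq_one_comm.mp hU1
  have hUmem : U ∈ Matrix.specialUnitaryGroup (Fin 2) ℂ := su2_mem a b h1
  have hcol : ∀ i, (M * U) i 0 = μ * U i 0 := by
    intro i
    have hvi := congrFun hv i
    simp only [Matrix.mulVec, dotProduct, Fin.sum_univ_two, Pi.smul_apply,
      smul_eq_mul] at hvi
    have hMU : (M * U) i 0 = M i 0 * a + M i 1 * b := by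
      simp [Matrix.mul_apply, Fin.sum_univ_two, hUdef]
    have hU0 : U i 0 = v i / n := by fin_cases i <;> simp [hUdef] <;> rfl
    rw [hMU, hU0]
    show M i 0 * (v 0 / n) + M i 1 * (v 1 / n) = μ * (v i / n)
    field_simp
    linear_combination hvi
  have h10 : (Uᴴ * M * U) 1 0 = 0 := by
    have hform : (Uᴴ * M * U) 1 0 = (starRingEnd ℂ) (U 0 1) * ((M * U) 0 0)
        + (starRingEnd ℂ) (U 1 1) * ((M * U) 1 0) := by
      rw [Matrix.mul_assoc]
      simp [Matrix.mul_apply, Fin.sum_univ_two, Matrix.conjTranspose_apply]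
    rw [hform, hcol 0, hcol 1]
    have e1 : U 0 1 = -(starRingEnd ℂ) b := by simp [hUdef]
    have e2 : U 1 1 = (starRingEnd ℂ) a := by simp [hUdef]
    have e3 : U 0 0 = a := by simp [hUdef]
    have e4 : U 1 0 = b := by simp [hUdef]
    rw [e1, e2, e3, e4, map_neg, Complex.conj_conj, Complex.conj_conj]
    ring
  have h01 : (Uᴴ * M * U) 0 1 = 0 := by
    have := normSq_offdiag _ (conj_normal hU2 M hM)
    rw [h10, Complex.normSq_zero] at this
    exact Complex.normSq_eq_zero.mp this
  exact ⟨U, hUmem, h01, h10⟩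

lemma diag_family {r : ℕ} (V : Fin r → Matrix (Fin 2) (Fin 2) ℂ)
    (hnormal : ∀ k, V k * (V k)ᴴ = (V k)ᴴ * V k)
    (hcomm : ∀ k l, V k * V l = V l * V k) :
    ∃ U ∈ Matrix.specialUnitaryGroup (Fin 2) ℂ,
      ∀ k, (Uᴴ * V k * U) 0 1 = 0 ∧ (Uᴴ * V k * U) 1 0 = 0 := by
  by_cases hall : ∀ k, V k 0 1 = 0 ∧ V k 1 0 = 0 ∧ V k 0 0 = V k 1 1
  · refine ⟨1, Submonoid.one_mem _, fun k => ?_⟩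
    rw [Matrix.conjTranspose_one, Matrix.one_mul, Matrix.mul_one]
    exact ⟨(hall k).1, (hall k).2.1⟩
  · push_neg at hall
    obtain ⟨m, hm⟩ := hall
    obtain ⟨U, hUmem, h01, h10⟩ := diag_single (V m) (hnormal m)
    obtain ⟨hU1, hU2⟩ := unitary_of_mem hUmem
    set D := Uᴴ * V m * U with hD
    have hne : D 0 0 ≠ D 1 1 := by
      intro heq
      set d : ℂ := D 0 0 with hd
      have hDscal : D = d • (1 : Matrix (Fin 2) (Fin 2) ℂ) := by
        ext i j
        fin_cases i <;> fin_cases j <;>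
          simp [Matrix.smul_apply, Matrix.one_apply, h01, h10, ← heq, ← hd]
      have hrec : U * D * Uᴴ = V m := by
        rw [hD, ← Matrix.mul_assoc, ← Matrix.mul_assoc, hU2, Matrix.one_mul,
          Matrix.mul_assoc, hU2, Matrix.mul_one]
      rw [hDscal] at hrec
      have hVm : V m = d • (1 : Matrix (Fin 2) (Fin 2) ℂ) := by
        rw [← hrec, Matrix.mul_smul, Matrix.smul_mul, Matrix.mul_one, hU2]
      refine hm ?_ ?_ ?_ <;> rw [hVm] <;>
        simp [Matrix.smul_apply, Matrix.one_apply]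
    refine ⟨U, hUmem, fun k => ?_⟩
    set B := Uᴴ * V k * U with hB
    have hcommBD : B * D = D * B := by
      rw [hB, hD]
      calc (Uᴴ * V k * U) * (Uᴴ * V m * U)
          = Uᴴ * (V k * V m) * U := by
            simp only [Matrix.mul_assoc, cancel_mid hU2]
        _ = Uᴴ * (V m * V k) * U := by rw [hcomm k m]
        _ = (Uᴴ * V m * U) * (Uᴴ * V k * U) := by
            simp only [Matrix.mul_assoc, cancel_mid hU2]
    constructor
    · have h := congrFun (congrFun hcommBD 0) 1
      simp only [Matrix.mul_apply, Fin.sum_univ_two, h01, h10, mul_zero, zero_mul,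
        add_zero, zero_add] at h
      have : B 0 1 * (D 1 1 - D 0 0) = 0 := by linear_combination h
      rcases mul_eq_zero.mp this with h' | h'
      · exact h'
      · exact absurd (by linear_combination -h' : D 0 0 = D 1 1) hne
    · have h := congrFun (congrFun hcommBD 1) 0
      simp only [Matrix.mul_apply, Fin.sum_univ_two, h01, h10, mul_zero, zero_mul,
        add_zero, zero_add] at h
      have : B 1 0 * (D 0 0 - D 1 1) = 0 := by linear_combination h
      rcases mul_eq_zero.mp this with h' | h'
      · exact h'
      · exact absurd (by linear_combination h') hne

noncomputable def Rrot : Matrix (Fin 2) (Fin 2) ℂ :=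
  !![((Real.sqrt 2)⁻¹ : ℝ), ((Real.sqrt 2)⁻¹ : ℝ);
     -((Real.sqrt 2)⁻¹ : ℝ), ((Real.sqrt 2)⁻¹ : ℝ)]

lemma csq : (((Real.sqrt 2)⁻¹ : ℝ) : ℂ) * (((Real.sqrt 2)⁻¹ : ℝ) : ℂ) = 1 / 2 := by
  have : (Real.sqrt 2)⁻¹ * (Real.sqrt 2)⁻¹ = 1 / 2 := by
    rw [← mul_inv]
    rw [Real.mul_self_sqrt (by norm_num : (0:ℝ) ≤ 2)]
    norm_num
  rw [← Complex.ofReal_mul, this]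
  norm_num

lemma Rrot_mem : Rrot ∈ Matrix.specialUnitaryGroup (Fin 2) ℂ := by
  have h := su2_mem (((Real.sqrt 2)⁻¹ : ℝ) : ℂ) (-(((Real.sqrt 2)⁻¹ : ℝ) : ℂ))
    (by rw [Complex.conj_ofReal, map_neg, Complex.conj_ofReal]; linear_combination 2 * csq)
  have : !![(((Real.sqrt 2)⁻¹ : ℝ) : ℂ), -(starRingEnd ℂ) (-(((Real.sqrt 2)⁻¹ : ℝ) : ℂ));
      -(((Real.sqrt 2)⁻¹ : ℝ) : ℂ), (starRingEnd ℂ) (((Real.sqrt 2)⁻¹ : ℝ) : ℂ)] = Rrot := by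
    rw [Rrot]
    congr 1 <;> simp [Complex.conj_ofReal]
  rwa [this] at h

lemma rot_entry (D : Matrix (Fin 2) (Fin 2) ℂ) (h01 : D 0 1 = 0) (h10 : D 1 0 = 0) :
    (Rrotᴴ * D * Rrot) 0 1 = (D 0 0 - D 1 1) / 2 := by
  have hc := csq
  rw [Matrix.mul_assoc]
  simp [Rrot, Matrix.mul_apply, Fin.sum_univ_two, Matrix.conjTranspose_apply, h01, h10,
    Complex.conj_ofReal]
  push_cast at hc ⊢
  ring_nf
  ring_nf at hc
  linear_combination (D 0 0 - D 1 1) * hc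

end Aux

theorem stmt_15 {r : ℕ} (V : Fin r → Matrix (Fin 2) (Fin 2) ℂ)
    (hnormal : ∀ k, V k * (V k)ᴴ = (V k)ᴴ * V k)
    (hcomm : ∀ k l, V k * V l = V l * V k)
    (μ0 : ℝ)
    (hμ0 : IsGreatest {y : ℝ | ∃ U ∈ Matrix.specialUnitaryGroup (Fin 2) ℂ,
      y = Jf V U 0 1} μ0) :
    μ0 = (1/4) * ∑ k, (2 * ((V k)ᴴ * V k).trace.re - ‖(V k).trace‖ ^ 2) ∧
    (∀ e₁ e₂ : Fin r → ℂ,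
      (∀ k, (V k).charpoly =
        (Polynomial.X - Polynomial.C (e₁ k)) * (Polynomial.X - Polynomial.C (e₂ k))) →
      μ0 = (1/4) * ∑ k, ‖e₁ k - e₂ k‖ ^ 2) := by
  obtain ⟨U, hUmem, hdiag⟩ := diag_family V hnormal hcomm
  obtain ⟨hU1, hU2⟩ := unitary_of_mem hUmem
  -- per-k identity: the claimed bound equals normSq of difference of diagonal entries
  have hkey : ∀ k, 2 * ((V k)ᴴ * V k).trace.re - ‖(V k).trace‖ ^ 2 =
      Complex.normSq ((Uᴴ * V k * U) 0 0 - (Uᴴ * V k * U) 1 1) := by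
    intro k
    have hnormD := conj_normal hU2 (V k) (hnormal k)
    have := trace_identity (Uᴴ * V k * U) hnormD
    rw [conj_trace_sq hU2, conj_trace hU2, (hdiag k).1, Complex.normSq_zero] at this
    rw [this, mul_zero, add_zero]
  -- upper bound for arbitrary unitary
  have hub : ∀ W ∈ Matrix.specialUnitaryGroup (Fin 2) ℂ, Jf V W 0 1 ≤
      (1/4) * ∑ k, (2 * ((V k)ᴴ * V k).trace.re - ‖(V k).trace‖ ^ 2) := by
    intro W hWmem
    obtain ⟨hW1, hW2⟩ := unitary_of_mem hWmem
    rw [Jf, Finset.mul_sum]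
    apply Finset.sum_le_sum
    intro k _
    have hnormB := conj_normal hW2 (V k) (hnormal k)
    have hid := trace_identity (Wᴴ * V k * W) hnormB
    rw [conj_trace_sq hW2, conj_trace hW2] at hid
    rw [Complex.sq_norm]
    nlinarith [Complex.normSq_nonneg ((Wᴴ * V k * W) 0 0 - (Wᴴ * V k * W) 1 1),
      Complex.normSq_nonneg ((Wᴴ * V k * W) 0 1)]
  -- the maximizer
  set W := U * Rrot with hW
  have hWmem : W ∈ Matrix.specialUnitaryGroup (Fin 2) ℂ :=
    Submonoid.mul_mem _ hUmem Rrot_mem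
  have hconjW : ∀ k, Wᴴ * V k * W = Rrotᴴ * (Uᴴ * V k * U) * Rrot := by
    intro k
    rw [hW, Matrix.conjTranspose_mul]
    simp only [Matrix.mul_assoc]
  have hJfW : Jf V W 0 1 =
      (1/4) * ∑ k, (2 * ((V k)ᴴ * V k).trace.re - ‖(V k).trace‖ ^ 2) := by
    rw [Jf, Finset.mul_sum]
    apply Finset.sum_congr rfl
    intro k _
    rw [hconjW k, rot_entry _ (hdiag k).1 (hdiag k).2, hkey k]
    rw [Complex.sq_norm, Complex.normSq_div]
    norm_num [Complex.normSq_apply]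
    ring
  have hμeq : μ0 = (1/4) * ∑ k,
      (2 * ((V k)ᴴ * V k).trace.re - ‖(V k).trace‖ ^ 2) := by
    apply le_antisymm
    · obtain ⟨U₀, hU₀, hy⟩ := hμ0.1
      rw [hy]
      exact hub U₀ hU₀
    · exact hμ0.2 ⟨W, hWmem, hJfW.symm⟩
  refine ⟨hμeq, fun e₁ e₂ hchar => ?_⟩
  rw [hμeq]
  congr 1
  apply Finset.sum_congr rfl
  intro k _
  -- extract trace and det from the charpoly hypothesis
  have hexp : (Polynomial.X - Polynomial.C (e₁ k)) * (Polynomial.X - Polynomial.C (e₂ k)) =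
      Polynomial.X ^ 2 - Polynomial.C (e₁ k + e₂ k) * Polynomial.X
        + Polynomial.C (e₁ k * e₂ k) := by
    rw [Polynomial.C_add, Polynomial.C_mul]; ring
  have htr : (V k).trace = e₁ k + e₂ k := by
    have h := Matrix.trace_eq_neg_charpoly_coeff (V k)
    rw [hchar k, hexp] at h
    simp only [Fintype.card_fin] at h
    rw [h]
    simp [Polynomial.coeff_sub, Polynomial.coeff_add, Polynomial.coeff_X_pow,
      Polynomial.coeff_C_mul, Polynomial.coeff_X, Polynomial.coeff_C]
  have hdet : (V k).det = e₁ k * e₂ k := by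
    have h := Matrix.det_eq_sign_charpoly_coeff (V k)
    rw [hchar k, hexp] at h
    simp only [Fintype.card_fin] at h
    rw [h]
    simp [Polynomial.coeff_sub, Polynomial.coeff_add, Polynomial.coeff_X_pow,
      Polynomial.coeff_C_mul, Polynomial.coeff_X, Polynomial.coeff_C]
  -- trace and det of the diagonalized matrix
  have htrD : (Uᴴ * V k * U) 0 0 + (Uᴴ * V k * U) 1 1 = e₁ k + e₂ k := by
    have h := conj_trace hU2 (V k)
    rw [Matrix.trace_fin_two] at h
    rw [h, htr]
  have hdetD : (Uᴴ * V k * U) 0 0 * (Uᴴ * V k * U) 1 1 = e₁ k * e₂ k := by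
    have hdU : (Uᴴ).det * U.det = 1 := by
      have h2 := (Matrix.mem_specialUnitaryGroup_iff.mp hUmem).2
      rw [Matrix.det_conjTranspose, h2]
      simp
    have hsim : (Uᴴ * V k * U).det = (V k).det := by
      rw [Matrix.det_mul, Matrix.det_mul]
      calc (Uᴴ).det * (V k).det * U.det = (Uᴴ).det * U.det * (V k).det := by ring
        _ = (V k).det := by rw [hdU, one_mul]
    have hDdet : (Uᴴ * V k * U).det = (Uᴴ * V k * U) 0 0 * (Uᴴ * V k * U) 1 1 := by
      rw [Matrix.det_fin_two, (hdiag k).1]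
      ring
    rw [← hDdet, hsim, hdet]
  have hsq : (e₁ k - e₂ k) ^ 2 = ((Uᴴ * V k * U) 0 0 - (Uᴴ * V k * U) 1 1) ^ 2 := by
    linear_combination (e₁ k + e₂ k + (Uᴴ * V k * U) 0 0 + (Uᴴ * V k * U) 1 1) * htrD.symm
      - 4 * hdetD.symm
  have habs : ‖e₁ k - e₂ k‖ ^ 2
      = ‖(Uᴴ * V k * U) 0 0 - (Uᴴ * V k * U) 1 1‖ ^ 2 := by
    rw [← norm_pow, ← norm_pow, hsq]
  rw [hkey k, ← Complex.sq_norm ((Uᴴ * V k * U) 0 0 - (Uᴴ * V k * U) 1 1), habs]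
end

section
/- Assume γ₊ > γ₋ (so Δ > 0). Define the interval I = [0, 1/2 − Δ/(4δ)] if δ ≥ Δ/2, I = [1/2 − Δ/(4δ), 1] if δ ≤ −Δ/2, and I = ∅ otherwise; note 1/2 ∉ I. Then for every λ ∈ I, μ(λ) = Δ²/(8δ(1 − 2λ)) + (Σ + δ)(1 − 2λ)/2, and for every λ ∈ [0,1] \ I, μ(λ) = (1/2)(Δ + (1 − 2λ)Σ). -/
open Matrix Complex

section Aux

lemma e01_plus (c : ℂ) (U : Matrix (Fin 2) (Fin 2) ℂ) :
    (Uᴴ * !![0, c; 0, 0] * U) 0 1 = starRingEnd ℂ (U 0 0) * c * U 1 1 := by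
  simp [Matrix.mul_apply, Fin.sum_univ_two, Matrix.conjTranspose_apply]

lemma e10_plus (c : ℂ) (U : Matrix (Fin 2) (Fin 2) ℂ) :
    (Uᴴ * !![0, c; 0, 0] * U) 1 0 = starRingEnd ℂ (U 0 1) * c * U 1 0 := by
  simp [Matrix.mul_apply, Fin.sum_univ_two, Matrix.conjTranspose_apply]

lemma e01_minus (c : ℂ) (U : Matrix (Fin 2) (Fin 2) ℂ) :
    (Uᴴ * !![0, 0; c, 0] * U) 0 1 = starRingEnd ℂ (U 1 0) * c * U 0 1 := by
  simp [Matrix.mul_apply, Fin.sum_univ_two, Matrix.conjTranspose_apply]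

lemma e10_minus (c : ℂ) (U : Matrix (Fin 2) (Fin 2) ℂ) :
    (Uᴴ * !![0, 0; c, 0] * U) 1 0 = starRingEnd ℂ (U 1 1) * c * U 0 0 := by
  simp [Matrix.mul_apply, Fin.sum_univ_two, Matrix.conjTranspose_apply]

lemma e01_z (c : ℂ) (U : Matrix (Fin 2) (Fin 2) ℂ) :
    ((Uᴴ * (c • (!![1, 0; 0, -1] : Matrix (Fin 2) (Fin 2) ℂ)) * U) : Matrix (Fin 2) (Fin 2) ℂ) 0 1
      = c * (starRingEnd ℂ (U 0 0) * U 0 1 - starRingEnd ℂ (U 1 0) * U 1 1) := by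
  simp [Matrix.mul_apply, Fin.sum_univ_two, Matrix.conjTranspose_apply]
  ring

lemma e10_z (c : ℂ) (U : Matrix (Fin 2) (Fin 2) ℂ) :
    ((Uᴴ * (c • (!![1, 0; 0, -1] : Matrix (Fin 2) (Fin 2) ℂ)) * U) : Matrix (Fin 2) (Fin 2) ℂ) 1 0
      = c * (starRingEnd ℂ (U 0 1) * U 0 0 - starRingEnd ℂ (U 1 1) * U 1 0) := by
  simp [Matrix.mul_apply, Fin.sum_univ_two, Matrix.conjTranspose_apply]
  ring

lemma su2_struct (U : Matrix (Fin 2) (Fin 2) ℂ) (hU : U ∈ Matrix.specialUnitaryGroup (Fin 2) ℂ) :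
    U 1 1 = starRingEnd ℂ (U 0 0) ∧ U 1 0 = -starRingEnd ℂ (U 0 1) ∧
    ‖U 0 0‖ ^ 2 + ‖U 0 1‖ ^ 2 = 1 := by
  rw [Matrix.mem_specialUnitaryGroup_iff, Matrix.mem_unitaryGroup_iff'] at hU
  obtain ⟨huni, hdet⟩ := hU
  rw [Matrix.star_eq_conjTranspose] at huni
  have hadj : Uᴴ = U.adjugate := by
    have h2 : U * U.adjugate = 1 := by rw [Matrix.mul_adjugate, hdet, one_smul]
    calc Uᴴ = Uᴴ * (U * U.adjugate) := by rw [h2, mul_one]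
    _ = (Uᴴ * U) * U.adjugate := by rw [mul_assoc]
    _ = U.adjugate := by rw [huni, one_mul]
  rw [Matrix.adjugate_fin_two] at hadj
  have h1 : U 1 1 = starRingEnd ℂ (U 0 0) := by
    have := congrFun (congrFun hadj 0) 0
    simp [Matrix.conjTranspose_apply] at this
    rw [← this]
  have h2 : U 1 0 = -starRingEnd ℂ (U 0 1) := by
    have := congrFun (congrFun hadj 0) 1
    simp [Matrix.conjTranspose_apply] at this
    have := congrArg (starRingEnd ℂ) this
    simpa using this
  refine ⟨h1, h2, ?_⟩
  rw [Matrix.det_fin_two, h1, h2] at hdet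
  have key : (U 0 0) * starRingEnd ℂ (U 0 0) + (U 0 1) * starRingEnd ℂ (U 0 1) = 1 := by
    rw [← hdet]; ring
  rw [Complex.sq_norm, Complex.sq_norm]
  rw [Complex.mul_conj, Complex.mul_conj] at key
  exact_mod_cast key

lemma Jf_formula (γp γm γz : ℝ) (hp : 0 ≤ γp) (hm : 0 ≤ γm) (hz : 0 ≤ γz)
    (V : Fin 3 → Matrix (Fin 2) (Fin 2) ℂ)
    (hV0 : V 0 = (Real.sqrt γp : ℂ) • ((1/2 : ℂ) •
      ((!![0, 1; 1, 0] : Matrix (Fin 2) (Fin 2) ℂ)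
        + Complex.I • (!![0, -Complex.I; Complex.I, 0] : Matrix (Fin 2) (Fin 2) ℂ))))
    (hV1 : V 1 = (Real.sqrt γm : ℂ) • ((1/2 : ℂ) •
      ((!![0, 1; 1, 0] : Matrix (Fin 2) (Fin 2) ℂ)
        - Complex.I • (!![0, -Complex.I; Complex.I, 0] : Matrix (Fin 2) (Fin 2) ℂ))))
    (hV2 : V 2 = (Real.sqrt γz : ℂ) • (!![1, 0; 0, -1] : Matrix (Fin 2) (Fin 2) ℂ))
    (U : Matrix (Fin 2) (Fin 2) ℂ) (hU : U ∈ Matrix.specialUnitaryGroup (Fin 2) ℂ) :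
    Jf V U 0 1 = γp * (‖U 0 0‖ ^ 2) ^ 2 + γm * (1 - ‖U 0 0‖ ^ 2) ^ 2
        + 4 * γz * (‖U 0 0‖ ^ 2) * (1 - ‖U 0 0‖ ^ 2)
    ∧ Jf V U 1 0 = γp * (1 - ‖U 0 0‖ ^ 2) ^ 2 + γm * (‖U 0 0‖ ^ 2) ^ 2
        + 4 * γz * (‖U 0 0‖ ^ 2) * (1 - ‖U 0 0‖ ^ 2) := by
  obtain ⟨h11, h10, hn⟩ := su2_struct U hU
  have hW0 : V 0 = !![0, (Real.sqrt γp : ℂ); 0, 0] := by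
    rw [hV0]; ext i j
    fin_cases i <;> fin_cases j <;> simp [Complex.I_mul_I] <;> ring_nf
  have hW1 : V 1 = !![0, 0; (Real.sqrt γm : ℂ), 0] := by
    rw [hV1]; ext i j
    fin_cases i <;> fin_cases j <;> simp [Complex.I_mul_I] <;> ring_nf
  set a := U 0 0 with ha
  set b := U 0 1 with hb
  set t := ‖a‖ ^ 2 with hts
  have hsb : ‖b‖ ^ 2 = 1 - t := by rw [hts] at hn ⊢; linarith
  have E1 : (Uᴴ * V 0 * U) 0 1 = (Real.sqrt γp : ℂ) * (starRingEnd ℂ a * starRingEnd ℂ a) := by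
    rw [hW0, e01_plus, h11]; ring
  have E2 : (Uᴴ * V 0 * U) 1 0 = -((Real.sqrt γp : ℂ) * (starRingEnd ℂ b * starRingEnd ℂ b)) := by
    rw [hW0, e10_plus, h10]; ring
  have E3 : (Uᴴ * V 1 * U) 0 1 = (Real.sqrt γm : ℂ) * (-(b * b)) := by
    rw [hW1, e01_minus, h10]; simp only [map_neg, Complex.conj_conj]; ring
  have E4 : (Uᴴ * V 1 * U) 1 0 = (Real.sqrt γm : ℂ) * (a * a) := by
    rw [hW1, e10_minus, h11]; simp only [Complex.conj_conj]; ring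
  have E5 : (Uᴴ * V 2 * U) 0 1 = (Real.sqrt γz : ℂ) * (2 * (starRingEnd ℂ a * b)) := by
    rw [hV2, e01_z, h11, h10]; simp only [map_neg, Complex.conj_conj]; ring
  have E6 : (Uᴴ * V 2 * U) 1 0 = (Real.sqrt γz : ℂ) * (2 * (a * starRingEnd ℂ b)) := by
    rw [hV2, e10_z, h11, h10]; simp only [map_neg, Complex.conj_conj]; ring
  have habs : ∀ z : ℂ, ∀ g : ℝ, 0 ≤ g →
      ‖(Real.sqrt g : ℂ) * z‖ ^ 2 = g * ‖z‖ ^ 2 := by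
    intro z g hg
    rw [norm_mul, mul_pow, Complex.norm_real, Real.norm_eq_abs, _root_.sq_abs, Real.sq_sqrt hg]
  have F1 : ‖starRingEnd ℂ a * starRingEnd ℂ a‖ ^ 2 = t ^ 2 := by
    rw [norm_mul, Complex.norm_conj, hts]; ring
  have F1b : ‖starRingEnd ℂ b * starRingEnd ℂ b‖ ^ 2 = (1 - t) ^ 2 := by
    rw [norm_mul, Complex.norm_conj]
    linear_combination (‖b‖ ^ 2 + 1 - t) * hsb
  have F2 : ‖-(b * b)‖ ^ 2 = (1 - t) ^ 2 := by
    rw [norm_neg, norm_mul]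
    linear_combination (‖b‖ ^ 2 + 1 - t) * hsb
  have F2b : ‖a * a‖ ^ 2 = t ^ 2 := by
    rw [norm_mul, hts]; ring
  have F3 : ‖2 * (starRingEnd ℂ a * b)‖ ^ 2 = 4 * t * (1 - t) := by
    rw [norm_mul, norm_mul, Complex.norm_conj, Complex.norm_two, hts]
    linear_combination (4 * ‖a‖ ^ 2) * hsb
  have F3b : ‖2 * (a * starRingEnd ℂ b)‖ ^ 2 = 4 * t * (1 - t) := by
    rw [norm_mul, norm_mul, Complex.norm_conj, Complex.norm_two, hts]
    linear_combination (4 * ‖a‖ ^ 2) * hsb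
  constructor
  · simp only [Jf, Fin.sum_univ_three]
    rw [E1, E3, E5, habs _ _ hp, habs _ _ hm, habs _ _ hz, F1, F2, F3]
    ring
  · simp only [Jf, Fin.sum_univ_three]
    rw [E2, E4, E6]
    rw [norm_neg, habs _ _ hp, habs _ _ hm, habs _ _ hz, F1b, F2b, F3b]
    ring

lemma exists_su2 (t : ℝ) (h0 : 0 ≤ t) (h1 : t ≤ 1) :
    ∃ U ∈ Matrix.specialUnitaryGroup (Fin 2) ℂ, ‖U 0 0‖ ^ 2 = t := by
  have hR : Real.sqrt t * Real.sqrt t + Real.sqrt (1-t) * Real.sqrt (1-t) = 1 := by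
    rw [Real.mul_self_sqrt h0, Real.mul_self_sqrt (by linarith)]; ring
  have hts : (Real.sqrt t : ℂ) * (Real.sqrt t : ℂ)
      + (Real.sqrt (1-t) : ℂ) * (Real.sqrt (1-t) : ℂ) = 1 := by exact_mod_cast hR
  set M : Matrix (Fin 2) (Fin 2) ℂ := !![(Real.sqrt t : ℂ), (Real.sqrt (1-t) : ℂ);
             -(Real.sqrt (1-t) : ℂ), (Real.sqrt t : ℂ)] with hM
  have hmem : M ∈ Matrix.specialUnitaryGroup (Fin 2) ℂ := by
    rw [Matrix.mem_specialUnitaryGroup_iff, Matrix.mem_unitaryGroup_iff',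
      Matrix.star_eq_conjTranspose]
    constructor
    · ext i j
      fin_cases i <;> fin_cases j <;>
        simp only [hM, Matrix.mul_apply, Fin.sum_univ_two, Matrix.conjTranspose_apply,
          Matrix.one_apply, Matrix.cons_val', Matrix.cons_val_zero, Matrix.cons_val_one,
          Matrix.head_cons, Matrix.head_fin_const, Matrix.empty_val',
          Matrix.cons_val_fin_one, Matrix.of_apply, map_neg, Complex.conj_ofReal] <;>
        (try simp) <;>
        first
          | ring1
          | linear_combination hts
          | (norm_cast; rw [sq, sq]; linarith [hR])
    · rw [hM, Matrix.det_fin_two]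
      simp only [Matrix.cons_val', Matrix.cons_val_zero, Matrix.cons_val_one,
        Matrix.head_cons, Matrix.empty_val', Matrix.cons_val_fin_one, Matrix.of_apply,
        Matrix.head_fin_const]
      linear_combination hts
  refine ⟨M, hmem, ?_⟩
  have he : M 0 0 = (Real.sqrt t : ℂ) := rfl
  rw [he, Complex.norm_real, Real.norm_eq_abs, _root_.sq_abs, Real.sq_sqrt h0]

def qfun (γp γm γz lam t : ℝ) : ℝ :=
  (γp*t^2 + γm*(1-t)^2 + 4*γz*t*(1-t))
    - lam * ((γp*t^2 + γm*(1-t)^2 + 4*γz*t*(1-t)) + (γp*(1-t)^2 + γm*t^2 + 4*γz*t*(1-t)))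

lemma greatest_interior (γp γm γz lam δ : ℝ) (hδ : δ = 2*γz - (γp+γm)/2)
    (hΔ : 0 < γp - γm) (hd : γp - γm ≤ 2*(1-2*lam)*δ) :
    IsGreatest {y | ∃ t, 0 ≤ t ∧ t ≤ 1 ∧ y = qfun γp γm γz lam t}
      ((γp-γm)^2 / (8*δ*(1-2*lam)) + ((γp+γm)+δ)*(1-2*lam)/2) := by
  have hγz : γz = δ/2 + (γp+γm)/4 := by linarith
  subst hγz
  have hD : 0 < (1-2*lam)*δ := by nlinarith
  have hD' : (8:ℝ)*δ*(1-2*lam) ≠ 0 := by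
    intro h; rw [show (8:ℝ)*δ*(1-2*lam) = 8*((1-2*lam)*δ) by ring] at h; nlinarith
  have hδ0 : δ ≠ 0 := by rintro rfl; simp at hD
  have hl0 : (1-2*lam) ≠ 0 := by intro h; rw [h] at hD; simp at hD
  constructor
  · refine ⟨1/2 + (γp-γm)/(4*((1-2*lam)*δ)), by positivity, ?_, ?_⟩
    · have : (γp-γm)/(4*((1-2*lam)*δ)) ≤ 1/2 := by
        rw [div_le_iff₀ (by positivity)]; nlinarith
      linarith
    · unfold qfun; field_simp; ring
  · rintro y ⟨t, h0, h1, rfl⟩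
    have key : ((γp-γm)^2 / (8*δ*(1-2*lam)) + ((γp+γm)+δ)*(1-2*lam)/2)
          - qfun γp γm (δ/2 + (γp+γm)/4) lam t
        = (2*(1-2*lam)*δ*(2*t-1) - (γp-γm))^2 / (8*δ*(1-2*lam)) := by
      unfold qfun; field_simp; ring
    have : 0 ≤ ((γp-γm)^2 / (8*δ*(1-2*lam)) + ((γp+γm)+δ)*(1-2*lam)/2)
          - qfun γp γm (δ/2 + (γp+γm)/4) lam t := by
      rw [key]
      apply div_nonneg (sq_nonneg _)
      rw [show (8:ℝ)*δ*(1-2*lam) = 8*((1-2*lam)*δ) by ring]; positivity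
    linarith

lemma greatest_endpoint (γp γm γz lam δ : ℝ) (hδ : δ = 2*γz - (γp+γm)/2)
    (hΔ : 0 < γp - γm) (hd : 2*(1-2*lam)*δ ≤ γp - γm) :
    IsGreatest {y | ∃ t, 0 ≤ t ∧ t ≤ 1 ∧ y = qfun γp γm γz lam t}
      ((1/2) * ((γp-γm) + (1-2*lam)*(γp+γm))) := by
  constructor
  · exact ⟨1, by norm_num, by norm_num, by unfold qfun; ring⟩
  · rintro y ⟨t, h0, h1, rfl⟩
    have key : (1/2) * ((γp-γm) + (1-2*lam)*(γp+γm)) - qfun γp γm γz lam t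
        = (1-t) * ((γp-γm) - 2*((1-2*lam)*δ)*t) := by
      unfold qfun; rw [hδ]; ring
    set D := (1-2*lam)*δ with hDdef
    have : 0 ≤ (1-t) * ((γp-γm) - 2*D*t) := by
      rcases le_or_gt D 0 with h | h
      · apply mul_nonneg (by linarith); nlinarith
      · apply mul_nonneg (by linarith); nlinarith
    linarith [key ▸ this]

lemma set_eq (γp γm γz lam : ℝ) (hp : 0 ≤ γp) (hm : 0 ≤ γm) (hz : 0 ≤ γz)
    (V : Fin 3 → Matrix (Fin 2) (Fin 2) ℂ)
    (hV0 : V 0 = (Real.sqrt γp : ℂ) • ((1/2 : ℂ) •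
      ((!![0, 1; 1, 0] : Matrix (Fin 2) (Fin 2) ℂ)
        + Complex.I • (!![0, -Complex.I; Complex.I, 0] : Matrix (Fin 2) (Fin 2) ℂ))))
    (hV1 : V 1 = (Real.sqrt γm : ℂ) • ((1/2 : ℂ) •
      ((!![0, 1; 1, 0] : Matrix (Fin 2) (Fin 2) ℂ)
        - Complex.I • (!![0, -Complex.I; Complex.I, 0] : Matrix (Fin 2) (Fin 2) ℂ))))
    (hV2 : V 2 = (Real.sqrt γz : ℂ) • (!![1, 0; 0, -1] : Matrix (Fin 2) (Fin 2) ℂ)) :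
    {y : ℝ | ∃ U ∈ Matrix.specialUnitaryGroup (Fin 2) ℂ,
        y = Jf V U 0 1 - lam * (Jf V U 0 1 + Jf V U 1 0)}
      = {y | ∃ t, 0 ≤ t ∧ t ≤ 1 ∧ y = qfun γp γm γz lam t} := by
  ext y
  simp only [Set.mem_setOf_eq]
  constructor
  · rintro ⟨U, hU, rfl⟩
    obtain ⟨J1, J2⟩ := Jf_formula γp γm γz hp hm hz V hV0 hV1 hV2 U hU
    refine ⟨‖U 0 0‖ ^ 2, by positivity, ?_, ?_⟩
    · have h3 := (su2_struct U hU).2.2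
      have : (0:ℝ) ≤ ‖U 0 1‖ ^ 2 := by positivity
      linarith
    · rw [J1, J2]; unfold qfun; ring
  · rintro ⟨t, h0, h1, rfl⟩
    obtain ⟨U, hU, hUt⟩ := exists_su2 t h0 h1
    obtain ⟨J1, J2⟩ := Jf_formula γp γm γz hp hm hz V hV0 hV1 hV2 U hU
    exact ⟨U, hU, by rw [J1, J2, hUt]; unfold qfun; ring⟩

end Aux

theorem stmt_18
    (γp γm γz : ℝ) (hpm : γm < γp) (hm : 0 ≤ γm) (hz : 0 ≤ γz)
    (Δ Sig δ : ℝ) (hΔ : Δ = γp - γm) (hSig : Sig = γp + γm) (hδ : δ = 2 * γz - Sig / 2)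
    (V : Fin 3 → Matrix (Fin 2) (Fin 2) ℂ)
    (hV0 : V 0 = (Real.sqrt γp : ℂ) • ((1/2 : ℂ) •
      ((!![0, 1; 1, 0] : Matrix (Fin 2) (Fin 2) ℂ)
        + Complex.I • (!![0, -Complex.I; Complex.I, 0] : Matrix (Fin 2) (Fin 2) ℂ))))
    (hV1 : V 1 = (Real.sqrt γm : ℂ) • ((1/2 : ℂ) •
      ((!![0, 1; 1, 0] : Matrix (Fin 2) (Fin 2) ℂ)
        - Complex.I • (!![0, -Complex.I; Complex.I, 0] : Matrix (Fin 2) (Fin 2) ℂ))))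
    (hV2 : V 2 = (Real.sqrt γz : ℂ) • (!![1, 0; 0, -1] : Matrix (Fin 2) (Fin 2) ℂ))
    (μ : ℝ → ℝ)
    (hμ : ∀ lam ∈ Set.Icc (0:ℝ) 1,
      IsGreatest {y : ℝ | ∃ U ∈ Matrix.specialUnitaryGroup (Fin 2) ℂ,
        y = Jf V U 0 1 - lam * (Jf V U 0 1 + Jf V U 1 0)} (μ lam)) :
    (Δ / 2 ≤ δ →
      (∀ lam ∈ Set.Icc (0:ℝ) (1/2 - Δ / (4 * δ)),
        μ lam = Δ ^ 2 / (8 * δ * (1 - 2 * lam)) + (Sig + δ) * (1 - 2 * lam) / 2) ∧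
      (∀ lam ∈ Set.Icc (0:ℝ) 1, lam ∉ Set.Icc (0:ℝ) (1/2 - Δ / (4 * δ)) →
        μ lam = (1/2) * (Δ + (1 - 2 * lam) * Sig)) ∧
      (1/2 : ℝ) ∉ Set.Icc (0:ℝ) (1/2 - Δ / (4 * δ))) ∧
    (δ ≤ -(Δ / 2) →
      (∀ lam ∈ Set.Icc (1/2 - Δ / (4 * δ)) (1:ℝ),
        μ lam = Δ ^ 2 / (8 * δ * (1 - 2 * lam)) + (Sig + δ) * (1 - 2 * lam) / 2) ∧
      (∀ lam ∈ Set.Icc (0:ℝ) 1, lam ∉ Set.Icc (1/2 - Δ / (4 * δ)) (1:ℝ) →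
        μ lam = (1/2) * (Δ + (1 - 2 * lam) * Sig)) ∧
      (1/2 : ℝ) ∉ Set.Icc (1/2 - Δ / (4 * δ)) (1:ℝ)) ∧
    (-(Δ / 2) < δ → δ < Δ / 2 →
      ∀ lam ∈ Set.Icc (0:ℝ) 1, μ lam = (1/2) * (Δ + (1 - 2 * lam) * Sig)) := by
  subst hΔ hSig
  have hp : (0:ℝ) ≤ γp := le_of_lt (lt_of_le_of_lt hm hpm)
  have hΔpos : 0 < γp - γm := by linarith
  have hδ' : δ = 2*γz - (γp+γm)/2 := hδ
  have hmu : ∀ lam ∈ Set.Icc (0:ℝ) 1,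
      IsGreatest {y | ∃ t, 0 ≤ t ∧ t ≤ 1 ∧ y = qfun γp γm γz lam t} (μ lam) := by
    intro lam hlam
    have h := hμ lam hlam
    rwa [set_eq γp γm γz lam hp hm hz V hV0 hV1 hV2] at h
  refine ⟨?_, ?_, ?_⟩
  · -- δ ≥ Δ/2 > 0
    intro hcase
    have hδpos : 0 < δ := by linarith
    refine ⟨?_, ?_, ?_⟩
    · intro lam ⟨hl0, hl1⟩
      have hfrac : 0 < (γp - γm) / (4*δ) := by positivity
      have hl1' : lam ≤ 1 := by
        have : (γp - γm) / (4*δ) > 0 := hfrac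
        linarith
      have hd : γp - γm ≤ 2*(1-2*lam)*δ := by
        have h2 : (γp - γm) / (4*δ) ≤ 1/2 - lam := by linarith
        rw [div_le_iff₀ (by positivity)] at h2
        nlinarith
      exact (hmu lam ⟨hl0, hl1'⟩).unique (greatest_interior γp γm γz lam δ hδ' hΔpos hd)
    · intro lam ⟨hl0, hl1⟩ hnot
      have hgt : 1/2 - (γp - γm)/(4*δ) < lam := by
        by_contra h
        exact hnot ⟨hl0, by linarith⟩
      have hd : 2*(1-2*lam)*δ ≤ γp - γm := by
        have h2 : 1/2 - lam < (γp - γm)/(4*δ) := by linarith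
        rw [lt_div_iff₀ (by positivity)] at h2
        nlinarith
      exact (hmu lam ⟨hl0, hl1⟩).unique (greatest_endpoint γp γm γz lam δ hδ' hΔpos hd)
    · intro ⟨h1, h2⟩
      have : 0 < (γp - γm)/(4*δ) := by positivity
      linarith
  · -- δ ≤ -Δ/2 < 0
    intro hcase
    have hδneg : δ < 0 := by linarith
    have hlb : 1/2 < 1/2 - (γp - γm)/(4*δ) := by
      have : (γp - γm)/(4*δ) < 0 := div_neg_of_pos_of_neg hΔpos (by linarith)
      linarith
    refine ⟨?_, ?_, ?_⟩
    · intro lam ⟨hl0, hl1⟩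
      have hl0' : (0:ℝ) ≤ lam := by linarith
      have hd : γp - γm ≤ 2*(1-2*lam)*δ := by
        have h2 : 1/2 - lam ≤ (γp - γm)/(4*δ) := by linarith
        rw [le_div_iff_of_neg (by linarith : 4*δ < 0)] at h2
        nlinarith
      exact (hmu lam ⟨hl0', hl1⟩).unique (greatest_interior γp γm γz lam δ hδ' hΔpos hd)
    · intro lam ⟨hl0, hl1⟩ hnot
      have hlt : lam < 1/2 - (γp - γm)/(4*δ) := by
        by_contra h
        exact hnot ⟨by linarith, hl1⟩
      have hd : 2*(1-2*lam)*δ ≤ γp - γm := by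
        have h2 : (γp - γm)/(4*δ) < 1/2 - lam := by linarith
        rw [div_lt_iff_of_neg (by linarith : 4*δ < 0)] at h2
        nlinarith
      exact (hmu lam ⟨hl0, hl1⟩).unique (greatest_endpoint γp γm γz lam δ hδ' hΔpos hd)
    · intro ⟨h1, h2⟩
      linarith
  · -- middle case
    intro hcase1 hcase2 lam ⟨hl0, hl1⟩
    have hd : 2*(1-2*lam)*δ ≤ γp - γm := by
      rcases le_or_gt 0 δ with h | h
      · nlinarith
      · nlinarith
    exact (hmu lam ⟨hl0, hl1⟩).unique (greatest_endpoint γp γm γz lam δ hδ' hΔpos hd)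
end
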